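/- arXiv:2004.00155 — 8 statements merged into one kernel-verified Lean document; each statement's English description precedes it below -/
import Mathlib

section
/- Let ω ∈ ℝ and K, T > 0 satisfy ω ≤ 2KT. Then f̄ is a single-well function with well at 1/2: for every s ∈ [0,1] with s ≠ 1/2 one has f̄(s) > f̄(1/2). -/
/-- The chemical free energy density `f̄(s) = ω s(1-s) + K T (s log s + (1-s) log (1-s))`.
Since `Real.log 0 = 0`, this formula automatically realizes the continuous extension
`f̄(0) = f̄(1) = 0`. -/
noncomputable def fbar (ω K T : ℝ) (s : ℝ) : ℝ :=
  ω * s * (1 - s) + K * T * (s * Real.log s + (1 - s) * Real.log (1 - s))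

lemma fbar_symm (ω K T s : ℝ) : fbar ω K T (1 - s) = fbar ω K T s := by
  unfold fbar
  rw [sub_sub_cancel]
  ring

lemma fbar_half (ω K T : ℝ) : fbar ω K T (1/2) = ω/4 - K*T*Real.log 2 := by
  unfold fbar
  norm_num
  rw [one_div, Real.log_inv]
  ring

lemma fbar_one (ω K T : ℝ) : fbar ω K T 1 = 0 := by
  simp [fbar]

lemma hasDerivAt_fbar (ω K T s : ℝ) (h0 : 0 < s) (h1 : s < 1) :
    HasDerivAt (fbar ω K T)
      (ω*(1-2*s) + K*T*(Real.log s - Real.log (1-s))) s := by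
  have h1' : (0:ℝ) < 1 - s := by linarith
  have dsub : HasDerivAt (fun x : ℝ => 1 - x) (-1) s := by
    simpa using (hasDerivAt_id s).const_sub 1
  have d1 : HasDerivAt (fun x : ℝ => x * Real.log x) (Real.log s + 1) s :=
    Real.hasDerivAt_mul_log h0.ne'
  have d2 : HasDerivAt (fun x : ℝ => (1 - x) * Real.log (1 - x))
      ((Real.log (1-s) + 1) * (-1)) s :=
    (Real.hasDerivAt_mul_log h1'.ne').comp s dsub
  have d3 : HasDerivAt (fun x : ℝ => ω * x * (1 - x)) (ω*(1-2*s)) s := by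
    have : HasDerivAt (fun x : ℝ => ω * x * (1 - x)) (ω * 1 * (1-s) + ω * s * (-1)) s :=
      ((hasDerivAt_id s).const_mul ω).mul dsub
    convert this using 1
    ring
  have := d3.add ((d1.add d2).const_mul (K*T))
  refine this.congr_deriv ?_
  ring

lemma hasDerivAt_phi (s : ℝ) (h0 : 0 < s) (h1 : s < 1) :
    HasDerivAt (fun x : ℝ => Real.log x - Real.log (1-x) - (4*x - 2))
      (1/s + 1/(1-s) - 4) s := by
  have h1' : (0:ℝ) < 1 - s := by linarith
  have dsub : HasDerivAt (fun x : ℝ => 1 - x) (-1) s := by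
    simpa using (hasDerivAt_id s).const_sub 1
  have dl1 : HasDerivAt Real.log (1/s) s := by
    simpa [one_div] using Real.hasDerivAt_log h0.ne'
  have dl2 : HasDerivAt (fun x : ℝ => Real.log (1 - x)) ((1/(1-s)) * (-1)) s := by
    simpa [one_div, Function.comp_def] using (Real.hasDerivAt_log h1'.ne').comp s dsub
  have dlin : HasDerivAt (fun x : ℝ => 4*x - 2) 4 s := by
    simpa using ((hasDerivAt_id s).const_mul (4:ℝ)).sub_const 2
  have := (dl1.sub dl2).sub dlin
  refine this.congr_deriv ?_
  ring

lemma phi_pos (s : ℝ) (h0 : 1/2 < s) (h1 : s < 1) :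
    0 < Real.log s - Real.log (1-s) - (4*s - 2) := by
  set φ : ℝ → ℝ := fun x => Real.log x - Real.log (1-x) - (4*x - 2) with hφ
  have hmono : StrictMonoOn φ (Set.Ico (1/2 : ℝ) 1) := by
    apply strictMonoOn_of_deriv_pos (convex_Ico _ _)
    · intro x hx
      have hx0 : (0:ℝ) < x := by norm_num at hx; linarith [hx.1]
      exact (hasDerivAt_phi x hx0 hx.2).continuousAt.continuousWithinAt
    · intro x hx
      rw [interior_Ico] at hx
      have hx0 : (0:ℝ) < x := by linarith [hx.1]
      have hx1 : (0:ℝ) < 1 - x := by linarith [hx.2]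
      rw [(hasDerivAt_phi x hx0 hx.2).deriv]
      have key : 1/x + 1/(1-x) - 4 = (2*x-1)^2 / (x*(1-x)) := by
        field_simp
        ring
      rw [key]
      apply div_pos
      · have : 2*x - 1 ≠ 0 := by intro h; nlinarith [hx.1]
        positivity
      · positivity
  have hval : φ (1/2) = 0 := by
    simp only [hφ]
    norm_num
  have := hmono (by constructor <;> norm_num) (⟨le_of_lt h0, h1⟩ : s ∈ Set.Ico (1/2:ℝ) 1) h0
  rw [hval] at this
  exact this

lemma fbar_lt_on_right (ω K T : ℝ) (hK : 0 < K) (hT : 0 < T)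
    (hω : ω ≤ 2 * K * T) (s : ℝ) (h0 : 1/2 < s) (h1 : s < 1) :
    fbar ω K T (1/2) < fbar ω K T s := by
  have hmono : StrictMonoOn (fbar ω K T) (Set.Ico (1/2 : ℝ) 1) := by
    apply strictMonoOn_of_deriv_pos (convex_Ico _ _)
    · intro x hx
      have hx0 : (0:ℝ) < x := by norm_num at hx; linarith [hx.1]
      exact (hasDerivAt_fbar ω K T x hx0 hx.2).continuousAt.continuousWithinAt
    · intro x hx
      rw [interior_Ico] at hx
      have hx0 : (0:ℝ) < x := by linarith [hx.1]
      rw [(hasDerivAt_fbar ω K T x hx0 hx.2).deriv]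
      have hphi := phi_pos x hx.1 hx.2
      have hKT : 0 < K * T := mul_pos hK hT
      nlinarith [hphi, hKT, mul_le_mul_of_nonneg_right hω (le_of_lt (show (0:ℝ) < 2*x-1 by linarith [hx.1]))]
  exact hmono (by constructor <;> norm_num) ⟨le_of_lt h0, h1⟩ h0

/-- If `ω ≤ 2KT` then `f̄` is a single-well function with well at `1/2`. -/
theorem single_well_of_omega_le (ω K T : ℝ) (hK : 0 < K) (hT : 0 < T)
    (hω : ω ≤ 2 * K * T) :
    ∀ s ∈ Set.Icc (0 : ℝ) 1, s ≠ 1 / 2 → fbar ω K T (1 / 2) < fbar ω K T s := by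
  intro s hs hne
  have hKT : 0 < K * T := mul_pos hK hT
  have hhalf : fbar ω K T (1/2) = ω/4 - K*T*Real.log 2 := fbar_half ω K T
  have hlog2 : (0.6931471803:ℝ) < Real.log 2 := Real.log_two_gt_d9
  have hends : fbar ω K T (1/2) < 0 := by
    rw [hhalf]; nlinarith
  rcases lt_trichotomy s (1/2) with hlt | heq | hgt
  · rcases eq_or_lt_of_le hs.1 with h0 | h0
    · rw [← h0]
      have : fbar ω K T 0 = 0 := by simp [fbar]
      rw [this]; exact hends
    · rw [← fbar_symm ω K T s]
      exact fbar_lt_on_right ω K T hK hT hω (1-s) (by linarith) (by linarith)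
  · exact absurd heq hne
  · rcases eq_or_lt_of_le hs.2 with h1 | h1
    · rw [h1, fbar_one]; exact hends
    · exact fbar_lt_on_right ω K T hK hT hω s hgt h1
end

section
/- Let ω ∈ ℝ and K, T > 0 satisfy ω > 2KT, and let μ0 ∈ (0,1/2) be such that f̄ attains its minimum over [0,1] exactly at μ0 and μ1 := 1−μ0. Then the well function f(s) := f̄(s) − f̄(μ0) has super-quadratic wells: there exists a constant Cw > 0 such that f(s) ≥ Cw · min((s−μ0)², (s−μ1)²) for all s ∈ [0,1]. -/
noncomputable def fdAux (ω K T : ℝ) (s : ℝ) : ℝ :=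
  ω * (1 - 2*s) + K*T*(Real.log s - Real.log (1-s))

lemma fbar_hasDerivAt (ω K T : ℝ) {s : ℝ} (h0 : s ≠ 0) (h1 : s ≠ 1) :
    HasDerivAt (fbar ω K T) (fdAux ω K T s) s := by
  have h1' : (1:ℝ) - s ≠ 0 := sub_ne_zero.mpr (Ne.symm h1)
  have hA := ((hasDerivAt_id s).const_mul ω).mul ((hasDerivAt_id s).const_sub 1)
  simp only [id_eq] at hA
  have hB : HasDerivAt (fun x : ℝ => x * Real.log x) (Real.log s + 1) s :=
    Real.hasDerivAt_mul_log h0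
  have hC := (Real.hasDerivAt_mul_log h1').comp s ((hasDerivAt_id s).const_sub 1)
  simp only [Function.comp_def, id_eq] at hC
  have h := hA.add ((hB.add hC).const_mul (K*T))
  have heq : fbar ω K T = fun x : ℝ =>
      ω * x * (1 - x) + K*T*(x * Real.log x + (1-x) * Real.log (1-x)) := by
    funext x; rfl
  rw [heq, fdAux]
  exact h.congr_deriv (by ring)

lemma fdAux_hasDerivAt (ω K T : ℝ) {s : ℝ} (h0 : 0 < s) (h1 : s < 1) :
    HasDerivAt (fdAux ω K T) (K*T*(1/s + 1/(1-s)) - 2*ω) s := by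
  have h0' : s ≠ 0 := ne_of_gt h0
  have h1' : (1:ℝ) - s ≠ 0 := by intro h; nlinarith [sub_eq_zero.mp h]
  have hA := (((hasDerivAt_id s).const_mul 2).const_sub 1).const_mul ω
  simp only [id_eq] at hA
  have hB : HasDerivAt Real.log s⁻¹ s := Real.hasDerivAt_log h0'
  have hC := (Real.hasDerivAt_log h1').comp s ((hasDerivAt_id s).const_sub 1)
  simp only [Function.comp_def, id_eq] at hC
  have h := hA.add ((hB.sub hC).const_mul (K*T))
  have heq : fdAux ω K T = fun x : ℝ =>
      ω * (1 - 2*x) + K*T*(Real.log x - Real.log (1-x)) := by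
    funext x; simp [fdAux]
  rw [heq]
  have : (1:ℝ) - s ≠ 0 := h1'
  exact h.congr_deriv (by field_simp; ring)

lemma fbar_continuous (ω K T : ℝ) : Continuous (fbar ω K T) := by
  have h1 : Continuous fun s : ℝ => s * Real.log s := Real.continuous_mul_log
  have h2 : Continuous fun s : ℝ => (1-s) * Real.log (1-s) :=
    h1.comp (continuous_const.sub continuous_id)
  have h : Continuous fun s : ℝ =>
      ω * s * (1 - s) + K*T*(s * Real.log s + (1-s) * Real.log (1-s)) := by
    apply Continuous.add
    · fun_prop
    · exact continuous_const.mul (h1.add h2)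
  exact h

set_option maxHeartbeats 1000000 in
/-- If `ω > 2KT` and `f̄` attains its minimum over `[0,1]` exactly at `μ0 ∈ (0,1/2)` and
`μ1 = 1 - μ0`, then the well function `f = f̄ - f̄(μ0)` has super-quadratic wells:
`f(s) ≥ Cw · min((s-μ0)², (s-μ1)²)` on `[0,1]` for some constant `Cw > 0`. -/
theorem superquadratic_wells (ω K T : ℝ) (hK : 0 < K) (hT : 0 < T)
    (hω : 2 * K * T < ω) (μ0 : ℝ) (hμ0 : μ0 ∈ Set.Ioo (0 : ℝ) (1 / 2))
    (hval : fbar ω K T μ0 = fbar ω K T (1 - μ0))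
    (hmin : ∀ s ∈ Set.Icc (0 : ℝ) 1, s ≠ μ0 → s ≠ 1 - μ0 →
      fbar ω K T μ0 < fbar ω K T s) :
    ∃ Cw > (0 : ℝ), ∀ s ∈ Set.Icc (0 : ℝ) 1,
      Cw * min ((s - μ0) ^ 2) ((s - (1 - μ0)) ^ 2) ≤ fbar ω K T s - fbar ω K T μ0 := by
  obtain ⟨hμ0pos, hμ0half⟩ := hμ0
  have hKT : 0 < K * T := mul_pos hK hT
  have hωpos : 0 < ω := by linarith
  -- derivative vanishes at μ0
  have hge : ∀ s ∈ Set.Icc (0:ℝ) 1, fbar ω K T μ0 ≤ fbar ω K T s := by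
    intro s hs
    by_cases h1 : s = μ0
    · rw [h1]
    by_cases h2 : s = 1 - μ0
    · rw [h2, ← hval]
    exact (hmin s hs h1 h2).le
  have hloc : IsLocalMin (fbar ω K T) μ0 := by
    have hmem : Set.Icc (0:ℝ) 1 ∈ nhds μ0 := Icc_mem_nhds (by linarith) (by linarith)
    exact Filter.eventually_of_mem hmem hge
  have hderiv0 : fdAux ω K T μ0 = 0 :=
    hloc.hasDerivAt_eq_zero (fbar_hasDerivAt ω K T (ne_of_gt hμ0pos) (by linarith))
  -- Step 1: μ0 (1-μ0) < K T / (2 ω)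
  have hkey : μ0 * (1 - μ0) < K*T/(2*ω) := by
    by_contra hcon
    push_neg at hcon
    have hconv : Convex ℝ (Set.Icc μ0 (1/2:ℝ)) := convex_Icc _ _
    have hint : interior (Set.Icc μ0 (1/2:ℝ)) = Set.Ioo μ0 (1/2:ℝ) := interior_Icc
    have hcontfd : ContinuousOn (fdAux ω K T) (Set.Icc μ0 (1/2:ℝ)) := by
      intro x hx
      exact (fdAux_hasDerivAt ω K T (lt_of_lt_of_le hμ0pos hx.1)
        (lt_of_le_of_lt hx.2 (by norm_num))).continuousAt.continuousWithinAt
    have hfdanti : StrictAntiOn (fdAux ω K T) (Set.Icc μ0 (1/2:ℝ)) := by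
      apply strictAntiOn_of_hasDerivWithinAt_neg hconv hcontfd
      · intro x hx
        rw [hint] at hx ⊢
        exact (fdAux_hasDerivAt ω K T (lt_trans hμ0pos hx.1)
          (by linarith [hx.2])).hasDerivWithinAt
      · intro x hx
        rw [hint] at hx
        obtain ⟨hx1, hx2⟩ := hx
        have hx0 : 0 < x := lt_trans hμ0pos hx1
        have hx1' : 0 < 1 - x := by linarith
        have hprod : μ0 * (1 - μ0) < x * (1 - x) := by nlinarith
        have hlt : K*T < 2*ω*(x*(1-x)) := by
          have h2 : K*T/(2*ω) ≤ μ0 * (1 - μ0) := hcon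
          rw [div_le_iff₀ (by positivity)] at h2
          nlinarith
        have he : 1/x + 1/(1-x) = 1/(x*(1-x)) := by field_simp; ring
        rw [he, sub_neg, mul_one_div, div_lt_iff₀ (by positivity)]
        linarith
    have hfdneg : ∀ x ∈ Set.Ioo μ0 (1/2:ℝ), fdAux ω K T x < 0 := by
      intro x hx
      have := hfdanti (Set.left_mem_Icc.mpr (by linarith)) ⟨hx.1.le, hx.2.le⟩ hx.1
      rw [hderiv0] at this
      exact this
    have hfanti : StrictAntiOn (fbar ω K T) (Set.Icc μ0 (1/2:ℝ)) := by
      apply strictAntiOn_of_hasDerivWithinAt_neg hconv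
        ((fbar_continuous ω K T).continuousOn)
      · intro x hx
        rw [hint] at hx ⊢
        exact (fbar_hasDerivAt ω K T (ne_of_gt (lt_trans hμ0pos hx.1))
          (by intro h; rw [h] at hx; linarith [hx.2])).hasDerivWithinAt
      · intro x hx
        rw [hint] at hx
        exact hfdneg x hx
    have h12 : fbar ω K T (1/2) < fbar ω K T μ0 :=
      hfanti (Set.left_mem_Icc.mpr (by linarith)) (Set.right_mem_Icc.mpr (by linarith))
        hμ0half
    have := hmin (1/2) (by constructor <;> norm_num) (by intro h; rw [h] at hμ0half; linarith)
      (by intro h; rw [h] at hμ0half; linarith)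
    linarith
  -- Step 2: choose a with μ0 < a < 1/2 and a(1-a)·2ω < K T
  have hexa : ∃ a : ℝ, μ0 < a ∧ a < 1/2 ∧ a*(1-a)*(2*ω) < K*T := by
    have hβ4 : K*T/(2*ω) < 1/4 := by
      rw [div_lt_iff₀ (by positivity)]
      nlinarith
    set β := K*T/(2*ω) with hβdef
    have hβ : 0 < β := by positivity
    have hkey' : μ0 * (1 - μ0) < β := hkey
    set d := 1 - 4*β with hddef
    have hd : 0 < d := by simp only [hddef]; linarith
    have hd1 : d < 1 := by simp only [hddef]; linarith
    have hsd0 : 0 < Real.sqrt d := Real.sqrt_pos.mpr hd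
    have hsd1 : Real.sqrt d < 1 := by
      rw [show (1:ℝ) = Real.sqrt 1 from (Real.sqrt_one).symm]
      exact Real.sqrt_lt_sqrt hd.le hd1
    have hsdsq : Real.sqrt d * Real.sqrt d = d := Real.mul_self_sqrt hd.le
    set r := (1 - Real.sqrt d)/2 with hrdef
    have hr0 : 0 < r := by simp only [hrdef]; linarith
    have hrhalf : r < 1/2 := by simp only [hrdef]; linarith
    have hrprod : r * (1 - r) = β := by
      simp only [hrdef]
      have hd' : Real.sqrt d * Real.sqrt d = 1 - 4*β := by rw [hsdsq, hddef]
      linear_combination (-(1:ℝ)/4) * hd'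
    have hμ0r : μ0 < r := by
      by_contra hcc
      push_neg at hcc
      nlinarith
    refine ⟨(μ0 + r)/2, by linarith, by linarith, ?_⟩
    have h1 : (μ0 + r)/2 * (1 - (μ0 + r)/2) < β := by nlinarith
    rw [hβdef, lt_div_iff₀ (by positivity)] at h1
    linarith
  obtain ⟨a, haμ0, hahalf, halt⟩ := hexa
  have ha0 : 0 < a := lt_trans hμ0pos haμ0
  have ha1 : 0 < 1 - a := by linarith
  set c := K*T/(a*(1-a)) - 2*ω with hcdef
  have hc : 0 < c := by
    rw [hcdef, sub_pos, lt_div_iff₀ (mul_pos ha0 ha1)]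
    linarith
  -- Step 3: φ := fdAux - c·id is monotone on (0, a]
  have hφmono : MonotoneOn (fun x => fdAux ω K T x - c*x) (Set.Ioc 0 a) := by
    apply monotoneOn_of_hasDerivWithinAt_nonneg (convex_Ioc _ _)
      (f' := fun x => (K*T*(1/x + 1/(1-x)) - 2*ω) - c)
    · intro x hx
      exact ((fdAux_hasDerivAt ω K T hx.1 (by linarith [hx.2])).sub
        ((hasDerivAt_id x).const_mul c)).continuousAt.continuousWithinAt
    · intro x hx
      rw [interior_Ioc] at hx ⊢
      have h := ((fdAux_hasDerivAt ω K T hx.1 (by linarith [hx.2])).sub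
        ((hasDerivAt_id x).const_mul c)).hasDerivWithinAt (s := Set.Ioo 0 a)
      exact h.congr_deriv (by ring)
    · intro x hx
      rw [interior_Ioc] at hx
      obtain ⟨hx0, hxa⟩ := hx
      have hx1 : 0 < 1 - x := by linarith
      have hprodle : x*(1-x) < a*(1-a) := by nlinarith
      have he : 1/x + 1/(1-x) = 1/(x*(1-x)) := by field_simp; ring
      have h2 : K*T/(a*(1-a)) ≤ K*T/(x*(1-x)) :=
        div_le_div_of_nonneg_left hKT.le (by positivity) hprodle.le
      rw [he, hcdef, mul_one_div]
      linarith
  have hφ : ∀ x ∈ Set.Ioc (0:ℝ) a, ∀ y ∈ Set.Ioc (0:ℝ) a, x ≤ y →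
      fdAux ω K T x - c*x ≤ fdAux ω K T y - c*y := fun x hx y hy h => hφmono hx hy h
  have hμ0mem : μ0 ∈ Set.Ioc (0:ℝ) a := ⟨hμ0pos, haμ0.le⟩
  -- quadratic growth on [0, a]
  have key1 : ∀ s ∈ Set.Icc (0:ℝ) a, c/2*(s-μ0)^2 ≤ fbar ω K T s - fbar ω K T μ0 := by
    have hder : ∀ x ∈ Set.Ioc (0:ℝ) a, HasDerivAt
        (fun x => fbar ω K T x - fbar ω K T μ0 - c/2*(x-μ0)^2)
        (fdAux ω K T x - c*(x-μ0)) x := by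
      intro x hx
      have h1 := (fbar_hasDerivAt ω K T (ne_of_gt hx.1)
        (by intro h; rw [h] at hx; have := hx.2; linarith)).sub_const (fbar ω K T μ0)
      have h2 := (((hasDerivAt_id x).sub_const μ0).pow 2).const_mul (c/2)
      simp only [id_eq] at h2
      have := h1.sub h2
      exact this.congr_deriv (by ring)
    intro s hs
    rcases le_or_gt μ0 s with hcase | hcase
    · -- monotone on [μ0, a]
      have hmono : MonotoneOn (fun x => fbar ω K T x - fbar ω K T μ0 - c/2*(x-μ0)^2)
          (Set.Icc μ0 a) := by
        apply monotoneOn_of_hasDerivWithinAt_nonneg (convex_Icc _ _)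
          (f' := fun x => fdAux ω K T x - c*(x-μ0))
        · intro x hx
          exact (hder x ⟨lt_of_lt_of_le hμ0pos hx.1, hx.2⟩).continuousAt.continuousWithinAt
        · intro x hx
          rw [interior_Icc] at hx ⊢
          exact (hder x ⟨lt_trans hμ0pos hx.1, hx.2.le⟩).hasDerivWithinAt
        · intro x hx
          rw [interior_Icc] at hx
          have hxm : x ∈ Set.Ioc (0:ℝ) a := ⟨lt_trans hμ0pos hx.1, hx.2.le⟩
          have := hφ μ0 hμ0mem x hxm hx.1.le
          rw [hderiv0] at this
          show 0 ≤ fdAux ω K T x - c*(x-μ0)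
          linarith
      have := hmono (Set.left_mem_Icc.mpr (by linarith [hs.2])) ⟨hcase, hs.2⟩ hcase
      simp only [sub_self] at this
      nlinarith [this]
    · -- antitone on [0, μ0]
      have hanti : AntitoneOn (fun x => fbar ω K T x - fbar ω K T μ0 - c/2*(x-μ0)^2)
          (Set.Icc 0 μ0) := by
        apply antitoneOn_of_hasDerivWithinAt_nonpos (convex_Icc _ _)
          (f' := fun x => fdAux ω K T x - c*(x-μ0))
        · apply ContinuousOn.sub
          · exact ((fbar_continuous ω K T).continuousOn).sub continuousOn_const
          · fun_prop
        · intro x hx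
          rw [interior_Icc] at hx ⊢
          exact (hder x ⟨hx.1, le_trans hx.2.le haμ0.le⟩).hasDerivWithinAt
        · intro x hx
          rw [interior_Icc] at hx
          have hxm : x ∈ Set.Ioc (0:ℝ) a := ⟨hx.1, le_trans hx.2.le haμ0.le⟩
          have := hφ x hxm μ0 hμ0mem hx.2.le
          rw [hderiv0] at this
          show fdAux ω K T x - c*(x-μ0) ≤ 0
          linarith
      have := hanti ⟨hs.1, hcase.le⟩ (Set.right_mem_Icc.mpr hμ0pos.le) hcase.le
      simp only [sub_self] at this
      nlinarith [this]
  -- Step 4: positive minimum on middle region [a, 1-a]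
  have hne : (Set.Icc a (1-a)).Nonempty := Set.nonempty_Icc.mpr (by linarith)
  obtain ⟨z, hz, hzmin'⟩ := isCompact_Icc.exists_isMinOn hne
    (((fbar_continuous ω K T).continuousOn (s := Set.Icc a (1-a))))
  have hzmin : ∀ y ∈ Set.Icc a (1-a), fbar ω K T z ≤ fbar ω K T y := fun y hy => hzmin' hy
  have hzpos : 0 < fbar ω K T z - fbar ω K T μ0 := by
    have h1 : z ≠ μ0 := by intro h; rw [h] at hz; linarith [hz.1]
    have h2 : z ≠ 1 - μ0 := by intro h; rw [h] at hz; linarith [hz.2]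
    have := hmin z ⟨by linarith [hz.1], by linarith [hz.2]⟩ h1 h2
    linarith
  set m := fbar ω K T z - fbar ω K T μ0 with hmdef
  -- Step 5: assemble
  refine ⟨min (c/2) m, lt_min (half_pos hc) hzpos, ?_⟩
  intro s hs
  obtain ⟨hs0, hs1⟩ := hs
  have hCw1 : min (c/2) m ≤ c/2 := min_le_left _ _
  have hCw2 : min (c/2) m ≤ m := min_le_right _ _
  have hCw0 : 0 < min (c/2) m := lt_min (half_pos hc) hzpos
  rcases le_or_gt s a with hcase1 | hcase1
  · -- left region
    have hq := key1 s ⟨hs0, hcase1⟩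
    have hminle : min ((s - μ0) ^ 2) ((s - (1 - μ0)) ^ 2) ≤ (s - μ0)^2 := min_le_left _ _
    have := mul_le_mul hCw1 hminle (le_min (sq_nonneg _) (sq_nonneg _)) (by linarith)
    linarith
  rcases le_or_gt (1-a) s with hcase2 | hcase2
  · -- right region, by symmetry
    have hmem : 1 - s ∈ Set.Icc (0:ℝ) a := ⟨by linarith, by linarith⟩
    have hq := key1 (1-s) hmem
    rw [fbar_symm ω K T s] at hq
    have he : ((1-s) - μ0)^2 = (s - (1 - μ0))^2 := by ring
    rw [he] at hq
    have hminle : min ((s - μ0) ^ 2) ((s - (1 - μ0)) ^ 2) ≤ (s - (1-μ0))^2 := min_le_right _ _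
    have := mul_le_mul hCw1 hminle (le_min (sq_nonneg _) (sq_nonneg _)) (by linarith)
    linarith
  · -- middle region
    have hm : m ≤ fbar ω K T s - fbar ω K T μ0 := by
      have := hzmin s ⟨hcase1.le, hcase2.le⟩
      rw [hmdef]
      linarith
    have hsq1 : (s - μ0)^2 ≤ 1 := by nlinarith
    have hminle : min ((s - μ0) ^ 2) ((s - (1 - μ0)) ^ 2) ≤ 1 :=
      le_trans (min_le_left _ _) hsq1
    have := mul_le_mul hCw2 hminle (le_min (sq_nonneg _) (sq_nonneg _)) hzpos.le
    rw [mul_one] at this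
    linarith
end

section
/- Let μ0 < μ1 be real numbers and let e0 be a symmetric real 2×2 matrix. Suppose there exist s ∈ ℝ, a ∈ ℝ², and ν ∈ ℝ² such that (μ1−μ0)·e0 + S_s = a ⊗ ν. Then (μ1−μ0)²·det(e0) + s² = 0; in particular det(e0) ≤ 0. -/
open Matrix

/-- If `(μ1-μ0) e0 + S_s = a ⊗ ν` for a symmetric 2×2 matrix `e0`, a skew-symmetric
matrix `S_s = [[0,s],[-s,0]]` and a rank-one matrix `a ⊗ ν`, then
`(μ1-μ0)² det(e0) + s² = 0`; in particular `det(e0) ≤ 0`. -/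
theorem rank_one_connection_det (μ0 μ1 : ℝ) (hμ : μ0 < μ1)
    (e0 : Matrix (Fin 2) (Fin 2) ℝ) (hsym : e0ᵀ = e0)
    (s : ℝ) (a ν : Fin 2 → ℝ)
    (heq : (μ1 - μ0) • e0 + !![(0 : ℝ), s; -s, 0] = vecMulVec a ν) :
    (μ1 - μ0) ^ 2 * e0.det + s ^ 2 = 0 ∧ e0.det ≤ 0 := by
  have hsymm : e0 1 0 = e0 0 1 := by
    have := congrFun (congrFun hsym 0) 1
    simpa [Matrix.transpose_apply] using this
  have h00 := congrFun (congrFun heq 0) 0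
  have h01 := congrFun (congrFun heq 0) 1
  have h10 := congrFun (congrFun heq 1) 0
  have h11 := congrFun (congrFun heq 1) 1
  simp [Matrix.add_apply, Matrix.smul_apply, vecMulVec_apply, Matrix.cons_val_zero,
    Matrix.cons_val_one, Matrix.head_cons, smul_eq_mul] at h00 h01 h10 h11
  have hdet : e0.det = e0 0 0 * e0 1 1 - e0 0 1 * e0 1 0 := Matrix.det_fin_two e0
  have hc : (0 : ℝ) < μ1 - μ0 := by linarith
  have key : (μ1 - μ0) ^ 2 * e0.det + s ^ 2 = 0 := by
    rw [hdet]
    have k2 : (μ1-μ0)*e0 0 0 * ((μ1-μ0)*e0 1 1)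
        = ((μ1-μ0)*e0 0 1 + s) * ((μ1-μ0)*e0 1 0 + -s) := by
      rw [h00, h01, h10, h11]; ring
    linear_combination k2 + (μ1-μ0)*s*hsymm
  refine ⟨key, ?_⟩
  nlinarith [sq_nonneg s, sq_nonneg (μ1 - μ0), mul_pos hc hc]
end

section
/- Let μ0 < μ1 be real numbers and let e0 be a symmetric real 2×2 matrix with det(e0) ≤ 0. Then, setting s := (μ1−μ0)·√(−det(e0)), there exist a ∈ ℝ² and a unit vector ν ∈ ℝ² such that (μ1−μ0)·e0 + S_s = a ⊗ ν. Moreover, for s ∈ ℝ the matrix (μ1−μ0)·e0 + S_s has determinant zero (equivalently, rank at most one) if and only if s = (μ1−μ0)·√(−det(e0)) or s = −(μ1−μ0)·√(−det(e0)). -/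
open Matrix

/-- Any 2×2 real matrix with zero determinant is an outer product with a unit vector. -/
lemma aux_rank_one (M : Matrix (Fin 2) (Fin 2) ℝ) (h : M.det = 0) :
    ∃ a ν : Fin 2 → ℝ, (ν 0) ^ 2 + (ν 1) ^ 2 = 1 ∧ M = vecMulVec a ν := by
  have hd : M 0 0 * M 1 1 - M 0 1 * M 1 0 = 0 := by
    simpa [Matrix.det_fin_two] using h
  by_cases h0 : M 0 0 = 0 ∧ M 0 1 = 0
  · by_cases h1 : M 1 0 = 0 ∧ M 1 1 = 0
    · refine ⟨0, ![1, 0], by norm_num, ?_⟩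
      ext i j
      fin_cases i <;> fin_cases j <;>
        simp [vecMulVec, h0.1, h0.2, h1.1, h1.2]
    · have hr2 : (0:ℝ) < M 1 0 ^ 2 + M 1 1 ^ 2 := by
        rcases not_and_or.mp h1 with hx | hx <;> positivity
      set r := Real.sqrt (M 1 0 ^ 2 + M 1 1 ^ 2) with hrdef
      have hr : 0 < r := Real.sqrt_pos.mpr hr2
      have hrsq : r ^ 2 = M 1 0 ^ 2 + M 1 1 ^ 2 := Real.sq_sqrt hr2.le
      refine ⟨![0, r], ![M 1 0 / r, M 1 1 / r], ?_, ?_⟩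
      · show (M 1 0 / r) ^ 2 + (M 1 1 / r) ^ 2 = 1
        field_simp
        linarith [hrsq]
      · ext i j
        fin_cases i <;> fin_cases j <;>
          simp [vecMulVec, h0.1, h0.2] <;> field_simp
  · have hr2 : (0:ℝ) < M 0 0 ^ 2 + M 0 1 ^ 2 := by
      rcases not_and_or.mp h0 with hx | hx <;> positivity
    set r := Real.sqrt (M 0 0 ^ 2 + M 0 1 ^ 2) with hrdef
    have hr : 0 < r := Real.sqrt_pos.mpr hr2
    have hrsq : r ^ 2 = M 0 0 ^ 2 + M 0 1 ^ 2 := Real.sq_sqrt hr2.le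
    refine ⟨![r, (M 1 0 * M 0 0 + M 1 1 * M 0 1) / r], ![M 0 0 / r, M 0 1 / r], ?_, ?_⟩
    · show (M 0 0 / r) ^ 2 + (M 0 1 / r) ^ 2 = 1
      field_simp
      linarith [hrsq]
    · ext i j
      fin_cases i <;> fin_cases j <;> simp [vecMulVec] <;> field_simp
      · linear_combination M 1 0 * hrsq - M 0 1 * hd
      · linear_combination M 1 1 * hrsq + M 0 0 * hd

/-- If `e0` is a symmetric 2×2 matrix with `det(e0) ≤ 0` and `μ0 < μ1`, then with
`s = (μ1-μ0)√(-det e0)` the matrix `(μ1-μ0) e0 + S_s` is a rank-one (outer) product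
`a ⊗ ν` with `ν` a unit vector; moreover for real `s` the matrix `(μ1-μ0) e0 + S_s` has
zero determinant if and only if `s = ±(μ1-μ0)√(-det e0)`. -/
theorem rank_one_connection_exists (μ0 μ1 : ℝ) (hμ : μ0 < μ1)
    (e0 : Matrix (Fin 2) (Fin 2) ℝ) (hsym : e0ᵀ = e0) (hdet : e0.det ≤ 0) :
    (∃ (a ν : Fin 2 → ℝ), (ν 0) ^ 2 + (ν 1) ^ 2 = 1 ∧
      (μ1 - μ0) • e0 +
          !![(0 : ℝ), (μ1 - μ0) * Real.sqrt (-e0.det);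
             -((μ1 - μ0) * Real.sqrt (-e0.det)), 0]
        = vecMulVec a ν) ∧
    ∀ s : ℝ, ((μ1 - μ0) • e0 + !![(0 : ℝ), s; -s, 0]).det = 0 ↔
      s = (μ1 - μ0) * Real.sqrt (-e0.det) ∨ s = -((μ1 - μ0) * Real.sqrt (-e0.det)) := by
  set t := μ1 - μ0 with ht
  have hsym' : e0 1 0 = e0 0 1 := by
    have := congrFun (congrFun hsym 0) 1
    simpa [Matrix.transpose_apply] using this
  have hde : e0.det = e0 0 0 * e0 1 1 - e0 0 1 * e0 0 1 := by
    rw [Matrix.det_fin_two, hsym']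
  have hdetM : ∀ s : ℝ, ((t : ℝ) • e0 + !![(0 : ℝ), s; -s, 0]).det
      = t ^ 2 * e0.det + s ^ 2 := by
    intro s
    rw [Matrix.det_fin_two]
    simp [Matrix.add_apply, Matrix.smul_apply, hsym', hde]
    ring
  have hsq : ((t : ℝ) * Real.sqrt (-e0.det)) ^ 2 = t ^ 2 * (-e0.det) := by
    rw [mul_pow, Real.sq_sqrt (by linarith)]
  constructor
  · apply aux_rank_one
    rw [hdetM]
    rw [hsq]; ring
  · intro s
    rw [hdetM]
    constructor
    · intro hz
      have : (s - t * Real.sqrt (-e0.det)) * (s + t * Real.sqrt (-e0.det)) = 0 := by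
        nlinarith [hsq]
      rcases mul_eq_zero.mp this with h | h
      · exact Or.inl (by linarith)
      · exact Or.inr (by linarith)
    · rintro (rfl | rfl) <;> nlinarith [hsq]
end

section
/- Let μ0 < μ1 be real numbers and let e0 be the 2×2 matrix with rows (0,1) and (1,0). If s ∈ ℝ, a ∈ ℝ² with a ≠ 0, and a unit vector ν ∈ ℝ² satisfy (μ1−μ0)·e0 + S_s = a ⊗ ν, then ν ∈ {(1,0), (−1,0), (0,1), (0,−1)}; that is, the only admissible interface normals for this lattice misfit are the coordinate directions up to sign. -/
open Matrix

/-- For the lattice misfit `e0 = [[0,1],[1,0]]`, the only admissible interface normals in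
the skew-symmetric rank-one connection `(μ1-μ0) e0 + S_s = a ⊗ ν` (with `a ≠ 0` and `ν`
a unit vector) are the coordinate directions up to sign. -/
theorem admissible_normals (μ0 μ1 : ℝ) (hμ : μ0 < μ1) (s : ℝ) (a ν : Fin 2 → ℝ)
    (ha : a ≠ 0) (hν : (ν 0) ^ 2 + (ν 1) ^ 2 = 1)
    (heq : (μ1 - μ0) • !![(0 : ℝ), 1; 1, 0] + !![(0 : ℝ), s; -s, 0] = vecMulVec a ν) :
    ν = ![1, 0] ∨ ν = ![-1, 0] ∨ ν = ![0, 1] ∨ ν = ![0, -1] := by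
  have h00 := congrFun (congrFun heq 0) 0
  have h01 := congrFun (congrFun heq 0) 1
  have h10 := congrFun (congrFun heq 1) 0
  have h11 := congrFun (congrFun heq 1) 1
  simp [vecMulVec_apply] at h00 h01 h10 h11
  have hne : ν 0 = 0 ∨ ν 1 = 0 := by
    by_contra h
    push_neg at h
    have ha0 : a 0 = 0 := h00.resolve_right h.1
    have ha1 : a 1 = 0 := h11.resolve_right h.2
    rw [ha0] at h01
    rw [ha1] at h10
    simp at h01 h10
    linarith
  rcases hne with h0 | h1
  · have : (ν 1 - 1) * (ν 1 + 1) = 0 := by nlinarith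
    rcases mul_eq_zero.mp this with h | h
    · right; right; left
      funext i; fin_cases i <;> simp [h0] <;> linarith
    · right; right; right
      funext i; fin_cases i <;> simp [h0] <;> linarith
  · have : (ν 0 - 1) * (ν 0 + 1) = 0 := by nlinarith
    rcases mul_eq_zero.mp this with h | h
    · left
      funext i; fin_cases i <;> simp [h1] <;> linarith
    · right; left
      funext i; fin_cases i <;> simp [h1] <;> linarith
end

section
/- Let ω ∈ ℝ and K, T > 0 satisfy ω > 2KT, let μ0 ∈ (0,1/2) be such that f̄ attains its minimum over [0,1] exactly at μ0 and μ1 := 1−μ0, and set f(s) := f̄(s) − f̄(μ0). Let y0 < y1, let ε > 0, and let c : [y0,y1] → [0,1] be continuously differentiable. Then ∫_{y0}^{y1} ( (1/ε)·f(c(y)) + ε·c′(y)² ) dy ≥ 2·d_I(c(y0), c(y1)). -/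
/-- The geodesic distance on `[0,1]` associated with the well potential `f`:
`d_I(s,s') = inf { ∫₀¹ √(f(ψ(t))) |ψ'(t)| dt : ψ ∈ C¹([0,1],[0,1]), ψ(0)=s, ψ(1)=s' }`. -/
noncomputable def dI (f : ℝ → ℝ) (s s' : ℝ) : ℝ :=
  sInf { v : ℝ | ∃ ψ : ℝ → ℝ, ContDiffOn ℝ 1 ψ (Set.Icc 0 1) ∧
    (∀ t ∈ Set.Icc (0 : ℝ) 1, ψ t ∈ Set.Icc (0 : ℝ) 1) ∧ ψ 0 = s ∧ ψ 1 = s' ∧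
    v = ∫ t in (0 : ℝ)..1, Real.sqrt (f (ψ t)) * |derivWithin ψ (Set.Icc 0 1) t| }

/-- One-dimensional Modica–Mortola bound: for a `C¹` function `c : [y0,y1] → [0,1]`,
`∫ ( (1/ε) f(c) + ε (c')² ) ≥ 2 d_I(c(y0), c(y1))`, where `f = f̄ - f̄(μ0)`. -/
theorem one_dim_energy_bound (ω K T : ℝ) (hK : 0 < K) (hT : 0 < T) (hω : 2 * K * T < ω)
    (μ0 : ℝ) (hμ0 : μ0 ∈ Set.Ioo (0 : ℝ) (1 / 2))
    (hval : fbar ω K T μ0 = fbar ω K T (1 - μ0))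
    (hmin : ∀ s ∈ Set.Icc (0 : ℝ) 1, s ≠ μ0 → s ≠ 1 - μ0 →
      fbar ω K T μ0 < fbar ω K T s)
    (y0 y1 : ℝ) (hy : y0 < y1) (ε : ℝ) (hε : 0 < ε) (c : ℝ → ℝ)
    (hc : ContDiffOn ℝ 1 c (Set.Icc y0 y1))
    (hc01 : ∀ y ∈ Set.Icc y0 y1, c y ∈ Set.Icc (0 : ℝ) 1) :
    2 * dI (fun s => fbar ω K T s - fbar ω K T μ0) (c y0) (c y1) ≤
      ∫ y in y0..y1,
        ((1 / ε) * (fbar ω K T (c y) - fbar ω K T μ0)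
          + ε * (derivWithin c (Set.Icc y0 y1) y) ^ 2) := by
  set F : ℝ → ℝ := fun s => fbar ω K T s - fbar ω K T μ0 with hF
  set c' : ℝ → ℝ := derivWithin c (Set.Icc y0 y1) with hc'
  have hud : UniqueDiffOn ℝ (Set.Icc y0 y1) := uniqueDiffOn_Icc hy
  have hud01 : UniqueDiffOn ℝ (Set.Icc (0:ℝ) 1) := uniqueDiffOn_Icc one_pos
  have hFcont : Continuous F := (fbar_continuous ω K T).sub continuous_const
  have hF0 : ∀ s ∈ Set.Icc (0:ℝ) 1, 0 ≤ F s := by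
    intro s hs
    rcases eq_or_ne s μ0 with rfl | h1
    · simp [hF]
    rcases eq_or_ne s (1 - μ0) with rfl | h2
    · simp only [hF, ← hval, sub_self, le_refl]
    · have := hmin s hs h1 h2; simp only [hF]; linarith
  have hc'cont : ContinuousOn c' (Set.Icc y0 y1) :=
    hc.continuousOn_derivWithin hud le_rfl
  set g : ℝ → ℝ := fun y => Real.sqrt (F (c y)) * |c' y| with hg
  have hgcont : ContinuousOn g (Set.Icc y0 y1) :=
    ((Real.continuous_sqrt.comp hFcont).comp_continuousOn hc.continuousOn).mul hc'cont.abs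
  -- Step A : dI ≤ ∫ g
  set L : ℝ := y1 - y0 with hL
  have hLpos : 0 < L := by simp [hL]; linarith
  set ψ : ℝ → ℝ := fun t => c (y0 + L * t) with hψ
  have hmaps : ∀ t ∈ Set.Icc (0:ℝ) 1, y0 + L * t ∈ Set.Icc y0 y1 := by
    intro t ht
    constructor
    · nlinarith [ht.1]
    · nlinarith [ht.2]
  have haff : ContDiff ℝ 1 (fun t : ℝ => y0 + L * t) := by fun_prop
  have hψC1 : ContDiffOn ℝ 1 ψ (Set.Icc 0 1) :=
    hc.comp (haff.contDiffOn) hmaps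
  have hψd : ∀ t ∈ Set.Icc (0:ℝ) 1,
      derivWithin ψ (Set.Icc 0 1) t = L * c' (y0 + L * t) := by
    intro t ht
    have hdc : HasDerivWithinAt c (c' (y0 + L * t)) (Set.Icc y0 y1) (y0 + L * t) :=
      ((hc.differentiableOn one_ne_zero) _ (hmaps t ht)).hasDerivWithinAt
    have hda : HasDerivWithinAt (fun t : ℝ => y0 + L * t) L (Set.Icc 0 1) t := by
      simpa using ((hasDerivAt_id t).const_mul L).const_add y0 |>.hasDerivWithinAt
    have hcomp : HasDerivWithinAt ψ (c' (y0 + L * t) * L) (Set.Icc 0 1) t :=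
      HasDerivWithinAt.comp t hdc hda hmaps
    have h2 := hcomp.derivWithin (hud01 t ht)
    rw [h2]; ring
  have hint_eq : (∫ t in (0:ℝ)..1, Real.sqrt (F (ψ t)) * |derivWithin ψ (Set.Icc 0 1) t|)
      = ∫ y in y0..y1, g y := by
    have h1 : (∫ t in (0:ℝ)..1, Real.sqrt (F (ψ t)) * |derivWithin ψ (Set.Icc 0 1) t|)
        = ∫ t in (0:ℝ)..1, L * g (y0 + L * t) := by
      apply intervalIntegral.integral_congr
      intro t ht
      rw [Set.uIcc_of_le (by norm_num : (0:ℝ) ≤ 1)] at ht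
      show Real.sqrt (F (ψ t)) * |derivWithin ψ (Set.Icc 0 1) t| = L * g (y0 + L * t)
      rw [hψd t ht]
      simp only [hg, hψ, abs_mul, abs_of_pos hLpos]
      ring
    rw [h1]
    rw [intervalIntegral.integral_const_mul]
    rw [← smul_eq_mul, intervalIntegral.smul_integral_comp_add_mul g L y0]
    norm_num [hL]
  have hdIle : dI F (c y0) (c y1) ≤ ∫ y in y0..y1, g y := by
    apply csInf_le
    · refine ⟨0, fun v hv => ?_⟩
      obtain ⟨φ, _, _, _, _, hveq⟩ := hv
      rw [hveq]
      apply intervalIntegral.integral_nonneg (by norm_num)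
      intro u _
      positivity
    · refine ⟨ψ, hψC1, fun t ht => hc01 _ (hmaps t ht), ?_, ?_, hint_eq.symm⟩
      · simp [hψ]
      · simp [hψ, hL]
  -- Step B : 2 ∫ g ≤ energy
  have hglee : ∀ y ∈ Set.Icc y0 y1, 2 * g y ≤ (1/ε) * F (c y) + ε * (c' y)^2 := by
    intro y hyy
    have ha : 0 ≤ F (c y) := hF0 _ (hc01 y hyy)
    have hsa : Real.sqrt (F (c y)) ^ 2 = F (c y) := Real.sq_sqrt ha
    have habs : |c' y| ^ 2 = (c' y) ^ 2 := sq_abs _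
    have h1 : 0 ≤ (Real.sqrt (F (c y)) - ε * |c' y|)^2 := sq_nonneg _
    simp only [hg]
    have hkey : 2 * (Real.sqrt (F (c y)) * |c' y|) * ε
        ≤ ((1/ε) * F (c y) + ε * (c' y)^2) * ε := by
      have hR : ((1/ε) * F (c y) + ε * (c' y)^2) * ε = F (c y) + ε^2 * (c' y)^2 := by
        field_simp
      rw [hR]
      nlinarith [sq_nonneg (Real.sqrt (F (c y)) - ε * |c' y|)]
    exact le_of_mul_le_mul_right hkey hε
  have hgint : IntervalIntegrable g MeasureTheory.volume y0 y1 :=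
    hgcont.intervalIntegrable_of_Icc hy.le
  have heint : IntervalIntegrable (fun y => (1/ε) * F (c y) + ε * (c' y)^2)
      MeasureTheory.volume y0 y1 := by
    apply ContinuousOn.intervalIntegrable_of_Icc hy.le
    exact (((hFcont.comp_continuousOn hc.continuousOn).const_smul (1/ε)).add
      ((hc'cont.pow 2).const_smul ε))
  calc 2 * dI F (c y0) (c y1) ≤ 2 * ∫ y in y0..y1, g y := by linarith
    _ = ∫ y in y0..y1, 2 * g y := (intervalIntegral.integral_const_mul 2 g).symm
    _ ≤ ∫ y in y0..y1, ((1/ε) * F (c y) + ε * (c' y)^2) := by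
        apply intervalIntegral.integral_mono_on hy.le (hgint.const_mul 2) heint
        exact hglee
end

section
/- Let ω ∈ ℝ and K, T > 0 satisfy ω > 2KT, let μ0 ∈ (0,1/2) be such that f̄ attains its minimum over [0,1] exactly at μ0 and μ1 := 1−μ0, and set f(s) := f̄(s) − f̄(μ0). Let d > 0, δ > 0, ε > 0, y0 < y1, and let c be a C¹ function with values in [0,1] on an open set containing [−d,d]×[y0,y1]. Suppose E ⊆ (−d,d) is measurable with ℒ¹(E) > d and for every x ∈ E one has |c(x,y0) − μ0| ≤ δ and |c(x,y1) − μ1| ≤ δ. Then ∫_{(−d,d)×(y0,y1)} ( (1/ε)·f(c(z)) + ε·‖∇c(z)‖² ) dz ≥ d · C_δ, where C_δ := inf { d_I(s,s′) : s, s′ ∈ [0,1], |s−μ0| ≤ δ, |s′−μ1| ≤ δ }. Moreover, if 2δ < μ1 − μ0 then C_δ > 0. -/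
/-- The transition cost between the δ-neighborhoods of the two wells:
`C_δ = inf { d_I(s,s') : s,s' ∈ [0,1], |s-μ0| ≤ δ, |s'-μ1| ≤ δ }`. -/
noncomputable def Cdelta (f : ℝ → ℝ) (μ0 μ1 δ : ℝ) : ℝ :=
  sInf { v : ℝ | ∃ s s' : ℝ, s ∈ Set.Icc (0 : ℝ) 1 ∧ s' ∈ Set.Icc (0 : ℝ) 1 ∧
    |s - μ0| ≤ δ ∧ |s' - μ1| ≤ δ ∧ v = dI f s s' }

/-- Squared Euclidean norm of the gradient of a scalar field on `ℝ²`. -/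
noncomputable def gradSq (c : ℝ × ℝ → ℝ) (z : ℝ × ℝ) : ℝ :=
  (fderiv ℝ c z (1, 0)) ^ 2 + (fderiv ℝ c z (0, 1)) ^ 2

open Set MeasureTheory

/-- The set over which the infimum in `dI` is taken. -/
noncomputable def dISet (f : ℝ → ℝ) (s s' : ℝ) : Set ℝ :=
  { v : ℝ | ∃ ψ : ℝ → ℝ, ContDiffOn ℝ 1 ψ (Set.Icc 0 1) ∧
    (∀ t ∈ Set.Icc (0 : ℝ) 1, ψ t ∈ Set.Icc (0 : ℝ) 1) ∧ ψ 0 = s ∧ ψ 1 = s' ∧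
    v = ∫ t in (0 : ℝ)..1, Real.sqrt (f (ψ t)) * |derivWithin ψ (Set.Icc 0 1) t| }

lemma dI_eq_sInf (f : ℝ → ℝ) (s s' : ℝ) : dI f s s' = sInf (dISet f s s') := rfl

lemma dISet_nonneg (f : ℝ → ℝ) (s s' : ℝ) : ∀ v ∈ dISet f s s', 0 ≤ v := by
  rintro v ⟨ψ, -, -, -, -, rfl⟩
  exact intervalIntegral.integral_nonneg (by norm_num)
    (fun u _ => mul_nonneg (Real.sqrt_nonneg _) (abs_nonneg _))

lemma dISet_bddBelow (f : ℝ → ℝ) (s s' : ℝ) : BddBelow (dISet f s s') :=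
  ⟨0, fun v hv => dISet_nonneg f s s' v hv⟩

lemma dISet_nonempty (f : ℝ → ℝ) {s s' : ℝ} (hs : s ∈ Icc (0:ℝ) 1)
    (hs' : s' ∈ Icc (0:ℝ) 1) : (dISet f s s').Nonempty := by
  refine ⟨_, (fun t => s + t * (s' - s)), ?_, ?_, by simp, by ring_nf, rfl⟩
  · exact (contDiff_const.add (contDiff_id.mul contDiff_const)).contDiffOn
  · intro t ht
    obtain ⟨ht0, ht1⟩ := ht
    obtain ⟨hs0, hs1⟩ := hs
    obtain ⟨hs0', hs1'⟩ := hs'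
    show s + t * (s' - s) ∈ Icc (0:ℝ) 1
    constructor <;> nlinarith

lemma dI_nonneg (f : ℝ → ℝ) (s s' : ℝ) : 0 ≤ dI f s s' :=
  Real.sInf_nonneg (dISet_nonneg f s s')

lemma crossing_lower (f : ℝ → ℝ) (hfc : Continuous f) {a b m : ℝ} (hab : a < b)
    (hm : 0 ≤ m) (hfm : ∀ u ∈ Set.Icc a b, m ≤ f u)
    {s s' : ℝ} (hsa : s ≤ a) (hbs' : b ≤ s') :
    ∀ v ∈ dISet f s s', Real.sqrt m * (b - a) ≤ v := by
  rintro v ⟨ψ, hψ, hrange, h0, h1, rfl⟩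
  have hcont : ContinuousOn ψ (Icc 0 1) := hψ.continuousOn
  set φ : ℝ → ℝ := derivWithin ψ (Icc 0 1) with hφ
  have hφcont : ContinuousOn φ (Icc 0 1) :=
    hψ.continuousOn_derivWithin (uniqueDiffOn_Icc one_pos) le_rfl
  have hHcont : ContinuousOn (fun t => Real.sqrt (f (ψ t)) * |φ t|) (Icc 0 1) :=
    ((Real.continuous_sqrt.comp hfc).comp_continuousOn hcont).mul hφcont.abs
  -- t2 : first time hitting b
  have hb_mem : b ∈ Icc (ψ 0) (ψ 1) := ⟨by rw [h0]; linarith, by rw [h1]; exact hbs'⟩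
  obtain ⟨t2', ht2'mem, ht2'⟩ := intermediate_value_Icc (by norm_num : (0:ℝ) ≤ 1) hcont hb_mem
  set S : Set ℝ := Icc 0 1 ∩ ψ ⁻¹' {b} with hSdef
  have hSclosed : IsClosed S :=
    hcont.preimage_isClosed_of_isClosed isClosed_Icc isClosed_singleton
  have hSne : S.Nonempty := ⟨t2', ht2'mem, ht2'⟩
  have hSbdd : BddBelow S := ⟨0, fun t ht => ht.1.1⟩
  set t2 := sInf S with ht2def
  have ht2S : t2 ∈ S := hSclosed.csInf_mem hSne hSbdd
  obtain ⟨⟨ht20, ht21⟩, ht2b⟩ := ht2S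
  have ht2b : ψ t2 = b := ht2b
  -- t1 : last time hitting a before t2
  have ha_mem : a ∈ Icc (ψ 0) (ψ t2) := ⟨by rw [h0]; exact hsa, by rw [ht2b]; exact hab.le⟩
  obtain ⟨t1', ht1'mem, ht1'⟩ := intermediate_value_Icc ht20
    (hcont.mono (Icc_subset_Icc le_rfl ht21)) ha_mem
  set T : Set ℝ := Icc 0 t2 ∩ ψ ⁻¹' {a} with hTdef
  have hTclosed : IsClosed T :=
    (hcont.mono (Icc_subset_Icc le_rfl ht21)).preimage_isClosed_of_isClosed
      isClosed_Icc isClosed_singleton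
  have hTne : T.Nonempty := ⟨t1', ht1'mem, ht1'⟩
  have hTbdd : BddAbove T := ⟨t2, fun t ht => ht.1.2⟩
  set t1 := sSup T with ht1def
  have ht1T : t1 ∈ T := hTclosed.csSup_mem hTne hTbdd
  obtain ⟨⟨ht10, ht1t2⟩, ht1a⟩ := ht1T
  have ht1a : ψ t1 = a := ht1a
  have ht12 : t1 < t2 := lt_of_le_of_ne ht1t2 (fun h => hab.ne' (by rw [h, ht2b] at ht1a; exact ht1a))
  have ht11 : t1 ≤ 1 := le_trans ht1t2 ht21
  -- on [t1,t2], ψ stays in [a,b]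
  have hmid : ∀ t ∈ Icc t1 t2, ψ t ∈ Icc a b := by
    rintro t ⟨htl, htr⟩
    have ht0 : (0:ℝ) ≤ t := le_trans ht10 htl
    have ht1le : t ≤ 1 := le_trans htr ht21
    constructor
    · by_contra hlt
      push_neg at hlt
      have htne : t1 < t := lt_of_le_of_ne htl (fun h => by rw [← h, ht1a] at hlt; linarith)
      obtain ⟨u, humem, hua⟩ := intermediate_value_Icc htr
        (hcont.mono (Icc_subset_Icc ht0 ht21))
        (⟨hlt.le, by rw [ht2b]; exact hab.le⟩ : a ∈ Icc (ψ t) (ψ t2))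
      have huT : u ∈ T := ⟨⟨le_trans ht0 humem.1, humem.2⟩, hua⟩
      have := le_csSup hTbdd huT
      linarith [humem.1]
    · by_contra hlt
      push_neg at hlt
      have htne : t < t2 := lt_of_le_of_ne htr (fun h => by rw [h, ht2b] at hlt; linarith)
      obtain ⟨u, humem, hub⟩ := intermediate_value_Icc htl
        (hcont.mono (Icc_subset_Icc ht10 ht1le))
        (⟨by rw [ht1a]; exact hab.le, hlt.le⟩ : b ∈ Icc (ψ t1) (ψ t))
      have huS : u ∈ S := ⟨⟨le_trans ht10 humem.1, le_trans humem.2 ht1le⟩, hub⟩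
      have := csInf_le hSbdd huS
      linarith [humem.2]
  -- FTC
  have hderiv : ∀ x ∈ Ioo t1 t2, HasDerivAt ψ (φ x) x := by
    intro x hx
    have hx01 : x ∈ Ioo (0:ℝ) 1 := ⟨lt_of_le_of_lt ht10 hx.1, lt_of_lt_of_le hx.2 ht21⟩
    have hnhds : Icc (0:ℝ) 1 ∈ nhds x := Icc_mem_nhds hx01.1 hx01.2
    have hdiff : DifferentiableAt ℝ ψ x :=
      ((hψ.differentiableOn one_ne_zero) x (Ioo_subset_Icc_self hx01)).differentiableAt hnhds
    have hw : φ x = deriv ψ x := derivWithin_of_mem_nhds hnhds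
    rw [hw]; exact hdiff.hasDerivAt
  have hφint : IntervalIntegrable φ volume t1 t2 := by
    apply ContinuousOn.intervalIntegrable
    rw [uIcc_of_le ht12.le]
    exact hφcont.mono (Icc_subset_Icc ht10 ht21)
  have hFTC : ∫ t in t1..t2, φ t = b - a := by
    rw [intervalIntegral.integral_eq_sub_of_hasDerivAt_of_le ht12.le
      (hcont.mono (Icc_subset_Icc ht10 ht21)) hderiv hφint, ht1a, ht2b]
  set H : ℝ → ℝ := fun t => Real.sqrt (f (ψ t)) * |φ t| with hHdef
  have hint01 : IntervalIntegrable H volume 0 1 := by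
    apply ContinuousOn.intervalIntegrable
    rw [uIcc_of_le (by norm_num : (0:ℝ) ≤ 1)]
    exact hHcont
  have hintsub : ∀ p q : ℝ, 0 ≤ p → p ≤ q → q ≤ 1 → IntervalIntegrable H volume p q := by
    intro p q hp hpq hq
    refine hint01.mono_set ?_
    rw [uIcc_of_le hpq, uIcc_of_le (by norm_num : (0:ℝ) ≤ 1)]
    exact Icc_subset_Icc hp hq
  have key : Real.sqrt m * (b - a) ≤ ∫ t in t1..t2, H t := by
    have h1' : Real.sqrt m * (b - a) = ∫ t in t1..t2, Real.sqrt m * φ t := by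
      rw [intervalIntegral.integral_const_mul, hFTC]
    rw [h1']
    apply intervalIntegral.integral_mono_on ht12.le (hφint.const_mul _)
      (hintsub t1 t2 ht10 ht12.le ht21)
    intro x hx
    calc Real.sqrt m * φ x ≤ Real.sqrt m * |φ x| :=
          mul_le_mul_of_nonneg_left (le_abs_self _) (Real.sqrt_nonneg _)
      _ ≤ Real.sqrt (f (ψ x)) * |φ x| :=
          mul_le_mul_of_nonneg_right (Real.sqrt_le_sqrt (hfm _ (hmid x hx))) (abs_nonneg _)
  have Hnonneg : ∀ p q : ℝ, p ≤ q → 0 ≤ ∫ t in p..q, H t := fun p q hpq =>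
    intervalIntegral.integral_nonneg hpq
      (fun u _ => mul_nonneg (Real.sqrt_nonneg _) (abs_nonneg _))
  have hsplit : ∫ t in (0:ℝ)..1, H t
      = (∫ t in (0:ℝ)..t1, H t) + ((∫ t in t1..t2, H t) + ∫ t in t2..1, H t) := by
    rw [intervalIntegral.integral_add_adjacent_intervals
        (hintsub t1 t2 ht10 ht12.le ht21) (hintsub t2 1 ht20 ht21 le_rfl),
      intervalIntegral.integral_add_adjacent_intervals
        (hintsub 0 t1 le_rfl ht10 ht11) (hintsub t1 1 ht10 ht11 le_rfl)]
  calc Real.sqrt m * (b - a) ≤ ∫ t in t1..t2, H t := key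
    _ ≤ ∫ t in (0:ℝ)..1, H t := by
        rw [hsplit]
        have := Hnonneg 0 t1 ht10
        have := Hnonneg t2 1 ht21
        linarith

lemma vertical_mem_dISet (f : ℝ → ℝ)
    (c : ℝ × ℝ → ℝ) {U : Set (ℝ × ℝ)} (hU : IsOpen U) (hcU : ContDiffOn ℝ 1 c U)
    (hc01 : ∀ z ∈ U, c z ∈ Icc (0:ℝ) 1)
    {x y0 y1 : ℝ} (hy : y0 < y1) (hline : ∀ y ∈ Icc y0 y1, (x, y) ∈ U) :
    (∫ y in y0..y1, Real.sqrt (f (c (x, y))) * |fderiv ℝ c (x, y) (0, 1)|)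
      ∈ dISet f (c (x, y0)) (c (x, y1)) := by
  set L : ℝ := y1 - y0 with hL
  have hLpos : 0 < L := by simp [hL]; linarith
  clear_value L
  set ψ : ℝ → ℝ := fun t => c (x, y0 + t * L) with hψdef
  set H : ℝ → ℝ := fun y => Real.sqrt (f (c (x, y))) * |fderiv ℝ c (x, y) (0, 1)| with hHdef
  have hmapy : ∀ t ∈ Icc (0:ℝ) 1, y0 + t * L ∈ Icc y0 y1 := by
    rintro t ⟨ht0, ht1⟩
    constructor <;> nlinarith
  have hγ : ContDiff ℝ 1 (fun t : ℝ => ((x, y0 + t * L) : ℝ × ℝ)) :=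
    contDiff_const.prodMk (contDiff_const.add (contDiff_id.mul contDiff_const))
  have hψC : ContDiffOn ℝ 1 ψ (Icc 0 1) :=
    hcU.comp hγ.contDiffOn (fun t ht => hline _ (hmapy t ht))
  have hψrange : ∀ t ∈ Icc (0:ℝ) 1, ψ t ∈ Icc (0:ℝ) 1 :=
    fun t ht => hc01 _ (hline _ (hmapy t ht))
  have hψ0 : ψ 0 = c (x, y0) := by simp [hψdef]
  have hψ1 : ψ 1 = c (x, y1) := by simp [hψdef, hL]
  refine ⟨ψ, hψC, hψrange, hψ0, hψ1, ?_⟩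
  -- compute derivWithin on the interior
  have hder : ∀ t ∈ Ioo (0:ℝ) 1,
      derivWithin ψ (Icc 0 1) t = L * fderiv ℝ c (x, y0 + t * L) (0, 1) := by
    intro t ht
    have hmem : (x, y0 + t * L) ∈ U := hline _ (hmapy t (Ioo_subset_Icc_self ht))
    have hcd : HasFDerivAt c (fderiv ℝ c (x, y0 + t * L)) (x, y0 + t * L) :=
      (((hcU.contDiffAt (hU.mem_nhds hmem)).differentiableAt one_ne_zero)).hasFDerivAt
    have hγd : HasDerivAt (fun t : ℝ => ((x, y0 + t * L) : ℝ × ℝ)) (0, 1 * L) t :=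
      (hasDerivAt_const t x).prodMk (((hasDerivAt_id t).mul_const L).const_add y0)
    have hcomp : HasDerivAt ψ (fderiv ℝ c (x, y0 + t * L) (0, 1 * L)) t :=
      hcd.comp_hasDerivAt t hγd
    have hval : fderiv ℝ c (x, y0 + t * L) (0, 1 * L)
        = L * fderiv ℝ c (x, y0 + t * L) (0, 1) := by
      have : ((0, 1 * L) : ℝ × ℝ) = L • ((0, 1) : ℝ × ℝ) := by
        simp [Prod.smul_def]
      rw [this, (fderiv ℝ c (x, y0 + t * L)).map_smul]
      simp
    have hnhds : Icc (0:ℝ) 1 ∈ nhds t := Icc_mem_nhds ht.1 ht.2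
    rw [derivWithin_of_mem_nhds hnhds, hcomp.deriv, hval]
  have hcongr : ∫ t in (0:ℝ)..1, Real.sqrt (f (ψ t)) * |derivWithin ψ (Icc 0 1) t|
      = ∫ t in (0:ℝ)..1, L * H (L * t + y0) := by
    apply intervalIntegral.integral_congr_ae
    have h1ae : ∀ᵐ t : ℝ, t ∉ ({1} : Set ℝ) :=
      measure_eq_zero_iff_ae_notMem.mp (measure_singleton 1)
    filter_upwards [h1ae] with t ht1 htI
    rw [uIoc_of_le (by norm_num : (0:ℝ) ≤ 1)] at htI
    have htIoo : t ∈ Ioo (0:ℝ) 1 := ⟨htI.1, lt_of_le_of_ne htI.2 (by simpa using ht1)⟩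
    rw [hder t htIoo]
    simp only [hψdef, hHdef]
    rw [abs_mul, abs_of_pos hLpos, show y0 + t * L = L * t + y0 from by ring]
    ring
  have hb1 : L * 1 + y0 = y1 := by rw [hL]; ring
  have hb0 : L * 0 + y0 = y0 := by ring
  rw [hcongr, intervalIntegral.integral_const_mul,
    intervalIntegral.integral_comp_mul_add H (ne_of_gt hLpos) y0, hb0, hb1, smul_eq_mul,
    ← mul_assoc, mul_inv_cancel₀ (ne_of_gt hLpos), one_mul]

/-- Transition energy in a box: if on a set `E ⊆ (-d,d)` of measure `> d` the values
`c(·,y0)` are δ-close to `μ0` and `c(·,y1)` are δ-close to `μ1`, then the Modica–Mortola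
part of the energy on the box is at least `d · C_δ`; moreover `C_δ > 0` if `2δ < μ1-μ0`. -/

theorem transition_energy_bound (ω K T : ℝ) (hK : 0 < K) (hT : 0 < T)
    (hω : 2 * K * T < ω) (μ0 : ℝ) (hμ0 : μ0 ∈ Set.Ioo (0 : ℝ) (1 / 2))
    (hval : fbar ω K T μ0 = fbar ω K T (1 - μ0))
    (hmin : ∀ s ∈ Set.Icc (0 : ℝ) 1, s ≠ μ0 → s ≠ 1 - μ0 →
      fbar ω K T μ0 < fbar ω K T s)
    (d δ ε : ℝ) (hd : 0 < d) (hδ : 0 < δ) (hε : 0 < ε)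
    (y0 y1 : ℝ) (hy : y0 < y1) (c : ℝ × ℝ → ℝ)
    (hc : ∃ U : Set (ℝ × ℝ), IsOpen U ∧ Set.Icc (-d) d ×ˢ Set.Icc y0 y1 ⊆ U ∧
      ContDiffOn ℝ 1 c U ∧ ∀ z ∈ U, c z ∈ Set.Icc (0 : ℝ) 1)
    (E : Set ℝ) (hE : E ⊆ Set.Ioo (-d) d) (hEmeas : MeasurableSet E)
    (hEvol : ENNReal.ofReal d < MeasureTheory.volume E)
    (hE0 : ∀ x ∈ E, |c (x, y0) - μ0| ≤ δ)
    (hE1 : ∀ x ∈ E, |c (x, y1) - (1 - μ0)| ≤ δ) :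
    d * Cdelta (fun s => fbar ω K T s - fbar ω K T μ0) μ0 (1 - μ0) δ ≤
      (∫ z in Set.Ioo (-d) d ×ˢ Set.Ioo y0 y1,
        ((1 / ε) * (fbar ω K T (c z) - fbar ω K T μ0) + ε * gradSq c z)) ∧
    (2 * δ < (1 - μ0) - μ0 →
      0 < Cdelta (fun s => fbar ω K T s - fbar ω K T μ0) μ0 (1 - μ0) δ) := by
  obtain ⟨U, hUopen, hUsub, hcU, hc01⟩ := hc
  set F : ℝ → ℝ := fun s => fbar ω K T s - fbar ω K T μ0 with hFdef
  have hμ00 : 0 < μ0 := hμ0.1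
  have hμ01 : μ0 < 1 / 2 := hμ0.2
  have hFc : Continuous F := by
    have h1 : Continuous (fun s : ℝ => s * Real.log s) := Real.continuous_mul_log
    have h2 : Continuous (fun s : ℝ => (1 - s) * Real.log (1 - s)) := by
      have heq : (fun s : ℝ => (1 - s) * Real.log (1 - s))
          = (fun u : ℝ => u * Real.log u) ∘ (fun s : ℝ => 1 - s) := rfl
      rw [heq]
      exact h1.comp (continuous_const.sub continuous_id)
    have hfb : Continuous (fun s => fbar ω K T s) := by
      have : (fun s => fbar ω K T s) = fun s : ℝ =>
          ω * s * (1 - s) + K * T * (s * Real.log s + (1 - s) * Real.log (1 - s)) := rfl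
      rw [this]
      exact (((continuous_const.mul continuous_id).mul
        (continuous_const.sub continuous_id)).add (continuous_const.mul (h1.add h2)))
    exact hfb.sub continuous_const
  have hFnn : ∀ u ∈ Set.Icc (0:ℝ) 1, 0 ≤ F u := by
    intro u hu
    rcases eq_or_ne u μ0 with rfl | h0
    · simp [hFdef]
    rcases eq_or_ne u (1 - μ0) with rfl | h1
    · simp [hFdef, ← hval]
    · have := hmin u hu h0 h1
      simp only [hFdef]
      linarith
  have hCnn : 0 ≤ Cdelta F μ0 (1 - μ0) δ := by
    apply Real.sInf_nonneg
    rintro v ⟨s, s', hs, hs', -, -, rfl⟩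
    exact dI_nonneg F s s'
  constructor
  · -- energy bound
    set e : ℝ × ℝ → ℝ :=
      fun z => 1 / ε * (fbar ω K T (c z) - fbar ω K T μ0) + ε * gradSq c z with hedef
    have hgc : ContinuousOn (fun z => fderiv ℝ c z) U :=
      hcU.continuousOn_fderiv_of_isOpen hUopen le_rfl
    have hg2 : ContinuousOn (fun z => fderiv ℝ c z ((0:ℝ), (1:ℝ))) U :=
      hgc.clm_apply continuousOn_const
    have hg1 : ContinuousOn (fun z => fderiv ℝ c z ((1:ℝ), (0:ℝ))) U :=
      hgc.clm_apply continuousOn_const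
    have hgradSq : ContinuousOn (gradSq c) U := by
      have : gradSq c = fun z =>
          (fderiv ℝ c z ((1:ℝ), (0:ℝ))) ^ 2 + (fderiv ℝ c z ((0:ℝ), (1:ℝ))) ^ 2 := rfl
      rw [this]
      exact (hg1.pow 2).add (hg2.pow 2)
    have hec : ContinuousOn e U := by
      apply ContinuousOn.add
      · exact continuousOn_const.mul
          ((hFc.comp_continuousOn hcU.continuousOn :
            ContinuousOn (fun z => F (c z)) U))
      · exact continuousOn_const.mul hgradSq
    have heint : IntegrableOn e (Set.Ioo (-d) d ×ˢ Set.Ioo y0 y1) volume := by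
      apply IntegrableOn.mono_set
        ((hec.mono hUsub).integrableOn_compact' (isCompact_Icc.prod isCompact_Icc)
          (measurableSet_Icc.prod measurableSet_Icc))
      exact Set.prod_mono Set.Ioo_subset_Icc_self Set.Ioo_subset_Icc_self
    set G : ℝ → ℝ := fun x => ∫ y in Set.Ioo y0 y1, e (x, y) with hGdef
    have hFub : (∫ z in Set.Ioo (-d) d ×ˢ Set.Ioo y0 y1, e z) = ∫ x in Set.Ioo (-d) d, G x := by
      rw [Measure.volume_eq_prod]
      rw [setIntegral_prod e (by rwa [← Measure.volume_eq_prod])]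
    have hGint : IntegrableOn G (Set.Ioo (-d) d) volume := by
      have h := heint
      rw [IntegrableOn, Measure.volume_eq_prod, ← Measure.prod_restrict] at h
      exact h.integral_prod_left
    have hepos : ∀ z ∈ U, 0 ≤ e z := by
      intro z hz
      have h1 : 0 ≤ F (c z) := hFnn _ (hc01 z hz)
      have h2 : 0 ≤ gradSq c z := add_nonneg (sq_nonneg _) (sq_nonneg _)
      have h3 : (0:ℝ) ≤ 1 / ε := by positivity
      simp only [hedef]
      have h1' : 0 ≤ fbar ω K T (c z) - fbar ω K T μ0 := h1
      nlinarith
    have hGnonneg : ∀ x ∈ Set.Ioo (-d) d, 0 ≤ G x := by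
      intro x hx
      apply setIntegral_nonneg measurableSet_Ioo
      intro y hy'
      exact hepos (x, y) (hUsub ⟨Set.Ioo_subset_Icc_self hx, Set.Ioo_subset_Icc_self hy'⟩)
    have hkey : ∀ x ∈ E, Cdelta F μ0 (1 - μ0) δ ≤ G x := by
      intro x hx
      have hxI : x ∈ Set.Icc (-d) d := Set.Ioo_subset_Icc_self (hE hx)
      have hline : ∀ y ∈ Set.Icc y0 y1, (x, y) ∈ U := fun y hy' => hUsub ⟨hxI, hy'⟩
      have hv := vertical_mem_dISet F c hUopen hcU hc01 hy hline
      have hCbdd : BddBelow { v : ℝ | ∃ s s' : ℝ, s ∈ Set.Icc (0:ℝ) 1 ∧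
          s' ∈ Set.Icc (0:ℝ) 1 ∧ |s - μ0| ≤ δ ∧ |s' - (1 - μ0)| ≤ δ ∧ v = dI F s s' } := by
        refine ⟨0, ?_⟩
        rintro v ⟨s, s', -, -, -, -, rfl⟩
        exact dI_nonneg F s s'
      have h1 : Cdelta F μ0 (1 - μ0) δ ≤ dI F (c (x, y0)) (c (x, y1)) :=
        csInf_le hCbdd ⟨c (x, y0), c (x, y1),
          hc01 _ (hline y0 (Set.left_mem_Icc.2 hy.le)),
          hc01 _ (hline y1 (Set.right_mem_Icc.2 hy.le)), hE0 x hx, hE1 x hx, rfl⟩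
      have h2 : dI F (c (x, y0)) (c (x, y1)) ≤
          ∫ y in y0..y1, Real.sqrt (F (c (x, y))) * |fderiv ℝ c (x, y) (0, 1)| :=
        csInf_le (dISet_bddBelow F _ _) hv
      have hcy : ContinuousOn (fun y => ((x, y) : ℝ × ℝ)) (Set.Icc y0 y1) :=
        (continuous_const.prodMk continuous_id).continuousOn
      have hcxy : ContinuousOn (fun y => c (x, y)) (Set.Icc y0 y1) :=
        hcU.continuousOn.comp hcy (fun y hy' => hline y hy')
      have hint1 : IntervalIntegrable
          (fun y => Real.sqrt (F (c (x, y))) * |fderiv ℝ c (x, y) (0, 1)|) volume y0 y1 := by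
        apply ContinuousOn.intervalIntegrable
        rw [Set.uIcc_of_le hy.le]
        apply ContinuousOn.mul
        · exact (Real.continuous_sqrt.comp hFc).comp_continuousOn hcxy
        · exact (hg2.comp hcy (fun y hy' => hline y hy')).abs
      have hint2 : IntervalIntegrable (fun y => e (x, y)) volume y0 y1 := by
        apply ContinuousOn.intervalIntegrable
        rw [Set.uIcc_of_le hy.le]
        exact hec.comp hcy (fun y hy' => hline y hy')
      have h3 : (∫ y in y0..y1, Real.sqrt (F (c (x, y))) * |fderiv ℝ c (x, y) (0, 1)|)
          ≤ ∫ y in y0..y1, e (x, y) := by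
        apply intervalIntegral.integral_mono_on hy.le hint1 hint2
        intro y hy'
        have hzU : (x, y) ∈ U := hline y hy'
        set A := Real.sqrt (F (c (x, y))) with hAdef
        set B := fderiv ℝ c (x, y) (0, 1) with hBdef
        have hA : A ^ 2 = F (c (x, y)) := Real.sq_sqrt (hFnn _ (hc01 _ hzU))
        have hAnn : 0 ≤ A := Real.sqrt_nonneg _
        have key : ε * (A * |B|) ≤ A ^ 2 + ε ^ 2 * B ^ 2 := by
          nlinarith [sq_nonneg (A - ε * |B|), sq_abs B, abs_nonneg B,
            mul_nonneg hε.le (mul_nonneg hAnn (abs_nonneg B))]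
        have key2 : 1 / ε * (ε * (A * |B|)) ≤ 1 / ε * (A ^ 2 + ε ^ 2 * B ^ 2) :=
          mul_le_mul_of_nonneg_left key (by positivity)
        have e1 : 1 / ε * (ε * (A * |B|)) = A * |B| := by field_simp
        have e2 : 1 / ε * (A ^ 2 + ε ^ 2 * B ^ 2) = 1 / ε * A ^ 2 + ε * B ^ 2 := by
          field_simp
        rw [e1, e2] at key2
        have hD : (0:ℝ) ≤ (fderiv ℝ c (x, y) (1, 0)) ^ 2 := sq_nonneg _
        show A * |B| ≤ e (x, y)
        simp only [hedef]
        have hgs : gradSq c (x, y) = (fderiv ℝ c (x, y) (1, 0)) ^ 2 + B ^ 2 := rfl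
        rw [hgs]
        have hFe : fbar ω K T (c (x, y)) - fbar ω K T μ0 = A ^ 2 := hA.symm
        rw [hFe]
        nlinarith [key2, hD, hε]
      have h4 : (∫ y in y0..y1, e (x, y)) = G x := by
        rw [intervalIntegral.integral_of_le hy.le, integral_Ioc_eq_integral_Ioo]
      linarith
    have hEfin : volume E < ⊤ := (measure_mono hE).trans_lt measure_Ioo_lt_top
    have h5 : (∫ x in E, G x) ≤ ∫ x in Set.Ioo (-d) d, G x := by
      apply setIntegral_mono_set hGint
      · exact (ae_restrict_iff' measurableSet_Ioo).2 (ae_of_all _ hGnonneg)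
      · exact HasSubset.Subset.eventuallyLE hE
    have h6 : (∫ _x in E, Cdelta F μ0 (1 - μ0) δ) ≤ ∫ x in E, G x := by
      apply setIntegral_mono_on (integrableOn_const hEfin.ne enorm_ne_top)
        (hGint.mono_set hE) hEmeas
      intro x hx
      exact hkey x hx
    have h7 : (∫ _x in E, Cdelta F μ0 (1 - μ0) δ)
        = (volume E).toReal * Cdelta F μ0 (1 - μ0) δ := by
      rw [setIntegral_const, smul_eq_mul]; rfl
    have h8 : d ≤ (volume E).toReal := by
      have := ENNReal.toReal_mono (ne_of_lt hEfin) hEvol.le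
      rwa [ENNReal.toReal_ofReal hd.le] at this
    have h9 : d * Cdelta F μ0 (1 - μ0) δ ≤ (volume E).toReal * Cdelta F μ0 (1 - μ0) δ :=
      mul_le_mul_of_nonneg_right h8 hCnn
    calc d * Cdelta F μ0 (1 - μ0) δ
        ≤ (volume E).toReal * Cdelta F μ0 (1 - μ0) δ := h9
      _ = ∫ _x in E, Cdelta F μ0 (1 - μ0) δ := h7.symm
      _ ≤ ∫ x in E, G x := h6
      _ ≤ ∫ x in Set.Ioo (-d) d, G x := h5
      _ = ∫ z in Set.Ioo (-d) d ×ˢ Set.Ioo y0 y1, e z := hFub.symm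
  · -- positivity
    intro h2δ
    set a := μ0 + δ with hadef
    set b := 1 - μ0 - δ with hbdef
    have hab : a < b := by simp only [hadef, hbdef]; linarith
    have habI : Set.Icc a b ⊆ Set.Icc (0:ℝ) 1 := by
      apply Set.Icc_subset_Icc
      · simp only [hadef]; linarith
      · simp only [hbdef]; linarith
    obtain ⟨u0, hu0mem, hu0min⟩ :=
      isCompact_Icc.exists_isMinOn (Set.nonempty_Icc.2 hab.le) hFc.continuousOn
    have hmpos : 0 < F u0 := by
      have h0 : u0 ≠ μ0 := by
        intro h
        have := hu0mem.1
        rw [h] at this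
        simp only [hadef] at this
        linarith
      have h1 : u0 ≠ 1 - μ0 := by
        intro h
        have := hu0mem.2
        rw [h] at this
        simp only [hbdef] at this
        linarith
      have := hmin u0 (habI hu0mem) h0 h1
      simp only [hFdef]
      linarith
    have hpos : 0 < Real.sqrt (F u0) * (b - a) :=
      mul_pos (Real.sqrt_pos.2 hmpos) (by linarith)
    refine lt_of_lt_of_le hpos (le_csInf ?_ ?_)
    · refine ⟨dI F μ0 (1 - μ0), μ0, 1 - μ0, ⟨hμ00.le, by linarith⟩,
        ⟨by linarith, by linarith⟩, by simp [hδ.le], by simp [hδ.le], rfl⟩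
    · rintro v ⟨s, s', hs, hs', hsδ, hs'δ, rfl⟩
      rw [dI_eq_sInf]
      refine le_csInf (dISet_nonempty F hs hs') ?_
      intro w hw
      have hsa : s ≤ a := by
        have := (abs_le.1 hsδ).2
        simp only [hadef]
        linarith
      have hbs' : b ≤ s' := by
        have := (abs_le.1 hs'δ).1
        simp only [hbdef]
        linarith
      exact crossing_lower F hFc hab hmpos.le (fun u hu => hu0min hu) hsa hbs' w hw
end

section
/- Let μ0 < μ1 be real numbers, let W : [μ0,μ1] → [0,∞) be continuous, and let ε > 0. Define φ : [μ0,μ1] → ℝ by φ(s) := ∫_{μ0}^{s} ε/√(ε + W(r)) dr and set T := φ(μ1). Then: (i) φ is strictly increasing and 0 < T ≤ √ε · (μ1−μ0); (ii) the inverse function ψ := φ⁻¹ : [0,T] → [μ0,μ1] is differentiable on (0,T) with ψ′(r) = √(ε + W(ψ(r)))/ε; and (iii) ∫_0^T ( (1/ε)·W(ψ(r)) + ε·ψ′(r)² ) dr ≤ ∫_{μ0}^{μ1} 2·√(ε + W(s)) ds. -/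
open Set Filter intervalIntegral

/-- The optimal-profile reparametrization `φ(s) = ∫_{μ0}^s ε/√(ε + W(r)) dr`. -/
noncomputable def phiProf (W : ℝ → ℝ) (ε μ0 : ℝ) (s : ℝ) : ℝ :=
  ∫ r in μ0..s, ε / Real.sqrt (ε + W r)

/-- Optimal-profile construction: `φ` is strictly increasing with
`0 < T := φ(μ1) ≤ √ε (μ1-μ0)`, its inverse `ψ` solves `ψ' = √(ε + W(ψ))/ε` on `(0,T)`,
and the transition profile `ψ` has Modica–Mortola energy at most
`∫_{μ0}^{μ1} 2√(ε + W)`. -/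
theorem optimal_profile (μ0 μ1 : ℝ) (hμ : μ0 < μ1) (W : ℝ → ℝ)
    (hW : ContinuousOn W (Set.Icc μ0 μ1))
    (hWnonneg : ∀ s ∈ Set.Icc μ0 μ1, 0 ≤ W s)
    (ε : ℝ) (hε : 0 < ε) :
    StrictMonoOn (phiProf W ε μ0) (Set.Icc μ0 μ1) ∧
    (0 < phiProf W ε μ0 μ1 ∧ phiProf W ε μ0 μ1 ≤ Real.sqrt ε * (μ1 - μ0)) ∧
    ∃ ψ : ℝ → ℝ,
      (∀ s ∈ Set.Icc μ0 μ1, ψ (phiProf W ε μ0 s) = s) ∧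
      (∀ r ∈ Set.Icc 0 (phiProf W ε μ0 μ1), phiProf W ε μ0 (ψ r) = r) ∧
      (∀ r ∈ Set.Ioo 0 (phiProf W ε μ0 μ1),
        HasDerivAt ψ (Real.sqrt (ε + W (ψ r)) / ε) r) ∧
      (∫ r in (0 : ℝ)..(phiProf W ε μ0 μ1),
          ((1 / ε) * W (ψ r) + ε * (deriv ψ r) ^ 2))
        ≤ ∫ s in μ0..μ1, 2 * Real.sqrt (ε + W s) := by
  have hμle : μ0 ≤ μ1 := hμ.le
  -- clamp to the interval
  set cl : ℝ → ℝ := fun x => max μ0 (min μ1 x) with hcl_def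
  have hclmem : ∀ x, cl x ∈ Icc μ0 μ1 := fun x =>
    ⟨le_max_left _ _, max_le hμle (min_le_left _ _)⟩
  have hclid : ∀ x ∈ Icc μ0 μ1, cl x = x := by
    intro x hx
    simp only [hcl_def]
    rw [min_eq_right hx.2, max_eq_right hx.1]
  have hclcont : Continuous cl := continuous_const.max (continuous_const.min continuous_id)
  set Wc : ℝ → ℝ := fun x => W (cl x) with hWc_def
  have hWccont : Continuous Wc := hW.comp_continuous hclcont hclmem
  have hWcnn : ∀ x, 0 ≤ Wc x := fun x => hWnonneg _ (hclmem x)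
  have hWceq : ∀ x ∈ Icc μ0 μ1, Wc x = W x := by
    intro x hx
    simp only [hWc_def]
    rw [hclid x hx]
  have hεWc : ∀ x, 0 < ε + Wc x := fun x => by linarith [hWcnn x]
  set g : ℝ → ℝ := fun r => ε / Real.sqrt (ε + Wc r) with hg_def
  have hsqrtpos : ∀ x, 0 < Real.sqrt (ε + Wc x) := fun x => Real.sqrt_pos.2 (hεWc x)
  have hgpos : ∀ x, 0 < g x := fun x => div_pos hε (hsqrtpos x)
  have hgcont : Continuous g :=
    continuous_const.div (Real.continuous_sqrt.comp (continuous_const.add hWccont))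
      fun x => (hsqrtpos x).ne'
  have hgle : ∀ x, g x ≤ Real.sqrt ε := by
    intro x
    have h1 : Real.sqrt ε ≤ Real.sqrt (ε + Wc x) := Real.sqrt_le_sqrt (by linarith [hWcnn x])
    have h2 : g x ≤ ε / Real.sqrt ε := by
      simp only [hg_def]
      gcongr
    calc g x ≤ ε / Real.sqrt ε := h2
      _ = Real.sqrt ε := Real.div_sqrt
  -- positive lower bound for g
  obtain ⟨x0, hx0, hx0min⟩ :=
    isCompact_Icc.exists_isMinOn (Set.nonempty_Icc.2 hμle)
      ((continuousOn_const.div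
        (Real.continuous_sqrt.comp_continuousOn (continuousOn_const.add hW))
        (fun x hx => (Real.sqrt_pos.2 (by linarith [hWnonneg x hx])).ne')) :
        ContinuousOn (fun r => ε / Real.sqrt (ε + W r)) (Icc μ0 μ1))
  set c : ℝ := ε / Real.sqrt (ε + W x0) with hc_def
  have hcpos : 0 < c :=
    div_pos hε (Real.sqrt_pos.2 (by linarith [hWnonneg x0 hx0]))
  have hcg : ∀ x, c ≤ g x := by
    intro x
    have := isMinOn_iff.mp hx0min (cl x) (hclmem x)
    simpa [hg_def, hWc_def] using this
  -- the primitive Φ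
  set Φ : ℝ → ℝ := fun s => ∫ t in μ0..s, g t with hΦ_def
  have hΦd : ∀ s, HasDerivAt Φ (g s) s := fun s =>
    (hgcont.integral_hasStrictDerivAt μ0 s).hasDerivAt
  have hΦmono : StrictMono Φ := by
    apply strictMono_of_deriv_pos
    intro x
    rw [(hΦd x).deriv]
    exact hgpos x
  have hΦcont : Continuous Φ :=
    Differentiable.continuous (fun x => (hΦd x).differentiableAt)
  have hΦ0 : Φ μ0 = 0 := intervalIntegral.integral_same
  -- lower / upper linear bounds, surjectivity
  have hlow : ∀ s, μ0 ≤ s → c * (s - μ0) ≤ Φ s := by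
    intro s hs
    have h := intervalIntegral.integral_mono_on hs (_root_.intervalIntegrable_const (μ := MeasureTheory.volume) (c := c))
      (hgcont.intervalIntegrable μ0 s) (fun x _ => hcg x)
    rw [intervalIntegral.integral_const, smul_eq_mul, mul_comm] at h
    exact h
  have hhigh : ∀ s, s ≤ μ0 → Φ s ≤ c * (s - μ0) := by
    intro s hs
    have h := intervalIntegral.integral_mono_on hs (_root_.intervalIntegrable_const (μ := MeasureTheory.volume) (c := c))
      (hgcont.intervalIntegrable s μ0) (fun x _ => hcg x)
    rw [intervalIntegral.integral_const, smul_eq_mul, mul_comm] at h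
    have hsymm : Φ s = -∫ t in s..μ0, g t := by
      simp only [hΦ_def]
      rw [intervalIntegral.integral_symm]
    have hring : c * (s - μ0) = -(c * (μ0 - s)) := by ring
    rw [hsymm, hring]
    linarith
  have htop : Tendsto Φ atTop atTop := by
    apply tendsto_atTop_mono' atTop
      (eventually_atTop.2 ⟨μ0, fun s hs => hlow s hs⟩)
    have : Tendsto (fun s : ℝ => s - μ0) atTop atTop :=
      tendsto_atTop_add_const_right atTop (-μ0) tendsto_id
    exact this.const_mul_atTop hcpos
  have hbot : Tendsto Φ atBot atBot := by
    apply tendsto_atBot_mono' atBot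
      (eventually_atBot.2 ⟨μ0, fun s hs => hhigh s hs⟩)
    have : Tendsto (fun s : ℝ => s - μ0) atBot atBot :=
      tendsto_atBot_add_const_right atBot (-μ0) tendsto_id
    exact this.const_mul_atBot hcpos
  have hΦsurj : Function.Surjective Φ := hΦcont.surjective htop hbot
  -- the inverse ψ
  set e : ℝ ≃o ℝ := StrictMono.orderIsoOfSurjective Φ hΦmono hΦsurj with he_def
  have he : ∀ s, e s = Φ s := fun s => congrFun (StrictMono.coe_orderIsoOfSurjective ..) s
  set ψ : ℝ → ℝ := fun r => e.symm r with hψ_def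
  have hψΦ : ∀ s, ψ (Φ s) = s := by
    intro s
    simp only [hψ_def, ← he]
    exact e.symm_apply_apply s
  have hΦψ : ∀ r, Φ (ψ r) = r := by
    intro r
    simp only [hψ_def, ← he]
    exact e.apply_symm_apply r
  have hψcont : Continuous ψ := e.symm.continuous
  have hψd : ∀ r, HasDerivAt ψ ((g (ψ r))⁻¹) r := fun r =>
    HasDerivAt.of_local_left_inverse hψcont.continuousAt (hΦd (ψ r))
      (hgpos (ψ r)).ne' (Eventually.of_forall hΦψ)
  have hderiv : deriv ψ = fun r => (g (ψ r))⁻¹ := funext fun r => (hψd r).deriv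
  have hψ0 : ψ 0 = μ0 := by rw [← hΦ0, hψΦ]
  have hψT : ψ (Φ μ1) = μ1 := hψΦ μ1
  have hψmono : Monotone ψ := e.symm.monotone
  have hmaps : ∀ r ∈ Icc 0 (Φ μ1), ψ r ∈ Icc μ0 μ1 := by
    intro r hr
    constructor
    · rw [← hψ0]; exact hψmono hr.1
    · rw [← hψT]; exact hψmono hr.2
  -- phiProf agrees with Φ on the interval
  have hphi : ∀ s ∈ Icc μ0 μ1, phiProf W ε μ0 s = Φ s := by
    intro s hs
    unfold phiProf
    apply intervalIntegral.integral_congr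
    intro x hx
    rw [uIcc_of_le hs.1] at hx
    simp only [hg_def]
    rw [← hWceq x ⟨hx.1, hx.2.trans hs.2⟩]
  have hT : phiProf W ε μ0 μ1 = Φ μ1 := hphi μ1 (right_mem_Icc.2 hμle)
  have hTpos : 0 < Φ μ1 := by
    rw [← hΦ0]; exact hΦmono hμ
  refine ⟨?_, ⟨?_, ?_⟩, ψ, ?_, ?_, ?_, ?_⟩
  · -- strict monotonicity
    intro a ha b hb hab
    rw [hphi a ha, hphi b hb]
    exact hΦmono hab
  · rw [hT]; exact hTpos
  · -- upper bound on T
    rw [hT]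
    have h := intervalIntegral.integral_mono_on hμle (hgcont.intervalIntegrable μ0 μ1)
      (_root_.intervalIntegrable_const (μ := MeasureTheory.volume) (c := Real.sqrt ε)) (fun x _ => hgle x)
    rw [intervalIntegral.integral_const, smul_eq_mul, mul_comm] at h
    exact h
  · intro s hs
    rw [hphi s hs]
    exact hψΦ s
  · intro r hr
    rw [hT] at hr
    rw [hphi (ψ r) (hmaps r hr)]
    exact hΦψ r
  · -- the ODE
    intro r hr
    rw [hT] at hr
    have hmem : ψ r ∈ Icc μ0 μ1 := hmaps r (Ioo_subset_Icc_self hr)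
    have h := hψd r
    have heq : (g (ψ r))⁻¹ = Real.sqrt (ε + W (ψ r)) / ε := by
      simp only [hg_def]
      rw [inv_div, hWceq _ hmem]
    rwa [heq] at h
  · -- the energy bound
    rw [hT]
    simp only [hderiv]
    have hT0 : (0 : ℝ) ≤ Φ μ1 := hTpos.le
    have hmapsTo : MapsTo ψ (Icc 0 (Φ μ1)) (Icc μ0 μ1) := fun r hr => hmaps r hr
    have hGcont : Continuous fun x => (g (ψ x))⁻¹ * (2 * Real.sqrt (ε + Wc (ψ x))) := by
      apply Continuous.mul
      · exact ((hgcont.comp hψcont).inv₀ fun x => (hgpos (ψ x)).ne')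
      · exact continuous_const.mul
          (Real.continuous_sqrt.comp (continuous_const.add (hWccont.comp hψcont)))
    have hFint : IntervalIntegrable
        (fun r => 1 / ε * W (ψ r) + ε * ((g (ψ r))⁻¹) ^ 2) MeasureTheory.volume 0 (Φ μ1) := by
      apply ContinuousOn.intervalIntegrable
      rw [uIcc_of_le hT0]
      apply ContinuousOn.add
      · exact continuousOn_const.mul (hW.comp hψcont.continuousOn hmapsTo)
      · exact (continuous_const.mul
          (((hgcont.comp hψcont).inv₀ fun x => (hgpos (ψ x)).ne').pow 2)).continuousOn
    have hsub : (∫ r in (0:ℝ)..(Φ μ1), (g (ψ r))⁻¹ * (2 * Real.sqrt (ε + Wc (ψ r))))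
        = ∫ s in μ0..μ1, 2 * Real.sqrt (ε + Wc s) := by
      have hcv := intervalIntegral.integral_comp_smul_deriv
        (f := ψ) (f' := fun r => (g (ψ r))⁻¹) (g := fun u => 2 * Real.sqrt (ε + Wc u))
        (a := 0) (b := Φ μ1)
        (fun x _ => hψd x)
        (((hgcont.comp hψcont).inv₀ fun x => (hgpos (ψ x)).ne').continuousOn)
        (continuous_const.mul
          (Real.continuous_sqrt.comp (continuous_const.add hWccont)))
      simp only [Function.comp, smul_eq_mul, hψ0, hψT] at hcv
      exact hcv
    calc (∫ r in (0:ℝ)..(Φ μ1), (1 / ε * W (ψ r) + ε * ((g (ψ r))⁻¹) ^ 2))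
        ≤ ∫ r in (0:ℝ)..(Φ μ1), (g (ψ r))⁻¹ * (2 * Real.sqrt (ε + Wc (ψ r))) := by
          apply intervalIntegral.integral_mono_on hT0 hFint
            (hGcont.intervalIntegrable 0 (Φ μ1))
          intro x hx
          have hmem : ψ x ∈ Icc μ0 μ1 := hmaps x hx
          rw [← hWceq _ hmem]
          have hw : 0 ≤ Wc (ψ x) := hWcnn (ψ x)
          have hsq : Real.sqrt (ε + Wc (ψ x)) ^ 2 = ε + Wc (ψ x) :=
            Real.sq_sqrt (by linarith)
          have hspos : 0 < Real.sqrt (ε + Wc (ψ x)) := hsqrtpos (ψ x)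
          have key : Real.sqrt (ε + Wc (ψ x)) * Real.sqrt (ε + Wc (ψ x)) = ε + Wc (ψ x) :=
            Real.mul_self_sqrt (by linarith)
          simp only [hg_def, inv_div]
          have e1 : ε * (Real.sqrt (ε + Wc (ψ x)) / ε) ^ 2 = (ε + Wc (ψ x)) / ε := by
            rw [div_pow, hsq]
            field_simp
          have e2 : Real.sqrt (ε + Wc (ψ x)) / ε * (2 * Real.sqrt (ε + Wc (ψ x)))
              = (2 * (ε + Wc (ψ x))) / ε := by
            rw [div_mul_eq_mul_div]
            congr 1
            linear_combination 2 * key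
          rw [e1, e2]
          have e3 : 1 / ε * Wc (ψ x) + (ε + Wc (ψ x)) / ε
              = (Wc (ψ x) + (ε + Wc (ψ x))) / ε := by ring
          rw [e3]
          gcongr
          linarith
      _ = ∫ s in μ0..μ1, 2 * Real.sqrt (ε + Wc s) := hsub
      _ = ∫ s in μ0..μ1, 2 * Real.sqrt (ε + W s) := by
          apply intervalIntegral.integral_congr
          intro x hx
          rw [uIcc_of_le hμle] at hx
          have := hWceq x hx
          simp only [this]
end
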